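/- Let G be a finite simple graph with an odd number of vertices and let e be an edge of G that is not contained in any odd matching of G. Then G is reconfigurable if and only if the graph G − e obtained by deleting the edge e is reconfigurable. -/

import Mathlib

/-- A vertex `v` is covered by the matching `M` if some edge of `M` contains it. -/
def Covers {V : Type*} (M : Set (Sym2 V)) (v : V) : Prop := ∃ e ∈ M, v ∈ e

/-- `M` is a matching of `G`: a set of edges of `G`, no two of which share a vertex. -/
def IsMatchingOn {V : Type*} (G : SimpleGraph V) (M : Set (Sym2 V)) : Prop :=
  M ⊆ G.edgeSet ∧ ∀ e ∈ M, ∀ f ∈ M, e ≠ f → ∀ v : V, v ∈ e → v ∉ f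

/-- `M` is an odd matching of `G`: a matching such that exactly one vertex is uncovered. -/
def IsOddMatching {V : Type*} (G : SimpleGraph V) (M : Set (Sym2 V)) : Prop :=
  IsMatchingOn G M ∧ ∃! v : V, ¬ Covers M v

/-- A flip transforms the odd matching `M` with isolated vertex `u` into
`M' = (M \ {vw}) ∪ {uv}`, where `uv` is an edge of `G` and `vw` is an edge of `M`. -/
def Flip {V : Type*} (G : SimpleGraph V) (M M' : Set (Sym2 V)) : Prop :=
  IsOddMatching G M ∧
  ∃ u v w : V, ¬ Covers M u ∧ s(u, v) ∈ G.edgeSet ∧ s(v, w) ∈ M ∧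
    M' = (M \ {s(v, w)}) ∪ {s(u, v)}

/-- `M` can be reconfigured to `M'` by some finite sequence of flips. -/
def Reconfig {V : Type*} (G : SimpleGraph V) (M M' : Set (Sym2 V)) : Prop :=
  Relation.ReflTransGen (Flip G) M M'

/-- `G` is reconfigurable: every odd matching can be reconfigured to every other one. -/
def Reconfigurable {V : Type*} (G : SimpleGraph V) : Prop :=
  ∀ M M' : Set (Sym2 V), IsOddMatching G M → IsOddMatching G M' → Reconfig G M M'

/-- `M` can be transformed into `M'` by a flip sequence of length exactly `k`. -/
def FlipSeq {V : Type*} (G : SimpleGraph V) (M M' : Set (Sym2 V)) (k : ℕ) : Prop :=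
  ∃ f : ℕ → Set (Sym2 V), f 0 = M ∧ f k = M' ∧ ∀ i < k, Flip G (f i) (f (i + 1))

/-- The graph obtained from `G` by deleting the vertex set `s` has a perfect matching:
a matching of `G` avoiding the vertices of `s` and covering all other vertices. -/
def HasPerfectMatchingAvoiding {V : Type*} (G : SimpleGraph V) (s : Set V) : Prop :=
  ∃ M : Set (Sym2 V), IsMatchingOn G M ∧ (∀ e ∈ M, ∀ v : V, v ∈ e → v ∉ s) ∧
    ∀ v : V, v ∉ s → Covers M v

/-- If the edge `e = uv` of `G` (a finite simple graph of odd order) is contained in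
no odd matching of `G`, then `G` is reconfigurable iff `G - e` is reconfigurable. -/
lemma flip_isOdd {V : Type*} {G : SimpleGraph V} {M M' : Set (Sym2 V)}
    (h : Flip G M M') : IsOddMatching G M' := by
  obtain ⟨⟨⟨hsub, hdisj⟩, hu⟩, a, b, c, hna, hab, hbc, hM'⟩ := h
  have hab' : a ≠ b := fun h => G.irrefl (h ▸ hab)
  have hbc' : b ≠ c := by intro h; exact G.irrefl (h ▸ hsub hbc)
  have hac : a ≠ c := by
    intro h; exact hna ⟨s(b,c), hbc, by simp [h]⟩
  -- b is covered only by s(b,c); c only by s(b,c)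
  have honly : ∀ f ∈ M, f ≠ s(b,c) → b ∉ f ∧ c ∉ f := by
    intro f hf hne
    exact ⟨fun hb => hdisj _ hbc _ hf (fun h => hne h.symm) b (by simp) hb,
           fun hc => hdisj _ hbc _ hf (fun h => hne h.symm) c (by simp) hc⟩
  have hnotinM : ∀ f ∈ M, a ∉ f := fun f hf ha => hna ⟨f, hf, ha⟩
  constructor
  · constructor
    · intro e hee
      rcases hM' ▸ hee with ⟨heM, _⟩ | he
      · exact hsub heM
      · simpa using he ▸ hab
    · intro e heM' f hfM' hne x hxe
      rw [hM'] at heM' hfM'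
      rcases heM' with ⟨heM, heν⟩ | he <;> rcases hfM' with ⟨hfM, hfν⟩ | hf
      · exact hdisj e heM f hfM hne x hxe
      · simp only [Set.mem_singleton_iff] at hf
        subst hf
        rw [Sym2.mem_iff]
        rintro (rfl | rfl)
        · exact hnotinM e heM hxe
        · exact (honly e heM (by simpa using heν)).1 hxe
      · simp only [Set.mem_singleton_iff] at he
        subst he
        rw [Sym2.mem_iff] at hxe
        rcases hxe with rfl | rfl
        · exact fun hx => hnotinM f hfM hx
        · exact fun hx => (honly f hfM (by simpa using hfν)).1 hx
      · simp only [Set.mem_singleton_iff] at he hf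
        exact absurd (he.trans hf.symm) hne
  · refine ⟨c, ?_, ?_⟩
    · rintro ⟨f, hfM', hcf⟩
      rw [hM'] at hfM'
      rcases hfM' with ⟨hfM, hfν⟩ | hf
      · exact (honly f hfM (by simpa using hfν)).2 hcf
      · simp only [Set.mem_singleton_iff] at hf
        subst hf
        rw [Sym2.mem_iff] at hcf
        rcases hcf with rfl | rfl
        · exact hac rfl
        · exact hbc' rfl
    · intro x hx
      by_contra hxc
      -- x ≠ c uncovered in M'
      rcases hu with ⟨y, hy, hyuniq⟩
      have hay : a = y := hyuniq a hna
      have hcova : Covers M' a := ⟨s(a,b), hM' ▸ Set.mem_union_right _ rfl, Sym2.mem_mk_left a b⟩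
      have hcovb : Covers M' b := ⟨s(a,b), hM' ▸ Set.mem_union_right _ rfl, Sym2.mem_mk_right a b⟩
      have hxa : x ≠ a := fun h => hx (h ▸ hcova)
      have hxb : x ≠ b := fun h => hx (h ▸ hcovb)
      -- x covered in M
      have : Covers M x := by
        by_contra hnc
        exact hxa ((hyuniq x hnc).trans hay.symm)
      obtain ⟨f, hfM, hxf⟩ := this
      have hfne : f ≠ s(b,c) := by
        rintro rfl
        rw [Sym2.mem_iff] at hxf
        rcases hxf with rfl | rfl
        · exact hxb rfl
        · exact hxc rfl
      exact hx ⟨f, hM' ▸ Set.mem_union_left _ ⟨hfM, by simpa using hfne⟩, hxf⟩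

lemma odd_del_iff {V : Type*} {G : SimpleGraph V} {u v : V}
    (he : ∀ M : Set (Sym2 V), IsOddMatching G M → s(u, v) ∉ M) (M : Set (Sym2 V)) :
    IsOddMatching (G.deleteEdges {s(u, v)}) M ↔ IsOddMatching G M := by
  rw [show ∀ N, IsOddMatching (G.deleteEdges {s(u,v)}) N ↔
      (N ⊆ (G.deleteEdges {s(u,v)}).edgeSet ∧ _) ∧ _ from fun _ => Iff.rfl]
  constructor
  · rintro ⟨⟨hsub, hd⟩, hu⟩
    exact ⟨⟨fun e heM => ((G.edgeSet_deleteEdges _ ▸ hsub) heM).1, hd⟩, hu⟩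
  · rintro h
    obtain ⟨⟨hsub, hd⟩, hu⟩ := h
    refine ⟨⟨?_, hd⟩, hu⟩
    rw [G.edgeSet_deleteEdges]
    intro e heM
    refine ⟨hsub heM, ?_⟩
    simp only [Set.mem_singleton_iff]
    rintro rfl
    exact he M ⟨⟨hsub, hd⟩, hu⟩ heM

lemma flip_del_of_flip {V : Type*} {G : SimpleGraph V} {u v : V}
    (he : ∀ M : Set (Sym2 V), IsOddMatching G M → s(u, v) ∉ M) {M M' : Set (Sym2 V)}
    (h : Flip G M M') : Flip (G.deleteEdges {s(u, v)}) M M' := by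
  have hM' := flip_isOdd h
  obtain ⟨hM, a, b, c, hna, hab, hbc, hMeq⟩ := h
  refine ⟨(odd_del_iff he M).2 hM, a, b, c, hna, ?_, hbc, hMeq⟩
  rw [G.edgeSet_deleteEdges]
  refine ⟨hab, ?_⟩
  simp only [Set.mem_singleton_iff]
  rintro hq
  exact he M' hM' (hq ▸ (hMeq ▸ Set.mem_union_right _ rfl))

lemma flip_of_flip_del {V : Type*} {G : SimpleGraph V} {u v : V} {M M' : Set (Sym2 V)}
    (h : Flip (G.deleteEdges {s(u, v)}) M M') : Flip G M M' := by
  obtain ⟨⟨⟨hsub, hd⟩, hu⟩, a, b, c, hna, hab, hbc, hMeq⟩ := h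
  have hsub' : ∀ e ∈ (G.deleteEdges {s(u,v)}).edgeSet, e ∈ G.edgeSet := by
    intro e hee; rw [G.edgeSet_deleteEdges] at hee; exact hee.1
  exact ⟨⟨⟨fun e heM => hsub' e (hsub heM), hd⟩, hu⟩,
    a, b, c, hna, hsub' _ hab, hbc, hMeq⟩

theorem stmt2 {V : Type*} [Fintype V] (G : SimpleGraph V)
    (hodd : Odd (Fintype.card V)) (u v : V) (huv : G.Adj u v)
    (he : ∀ M : Set (Sym2 V), IsOddMatching G M → s(u, v) ∉ M) :
    Reconfigurable G ↔ Reconfigurable (G.deleteEdges {s(u, v)}) := by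
  constructor
  · intro h M M' hM hM'
    have := h M M' ((odd_del_iff he M).1 hM) ((odd_del_iff he M').1 hM')
    exact Relation.ReflTransGen.mono (fun _ _ hf => flip_del_of_flip he hf) _ _ this
  · intro h M M' hM hM'
    have := h M M' ((odd_del_iff he M).2 hM) ((odd_del_iff he M').2 hM')
    exact Relation.ReflTransGen.mono (fun _ _ hf => flip_of_flip_del hf) _ _ this
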